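/- Let T : C → D be a triangulated functor between triangulated categories with t-structures, with C = ⋃_b C^{≤b} (all objects bounded above). If T is right t-exact (T(C^{≤0}) ⊆ D^{≤0}) and T sends the heart of C into the heart of D, then T is t-exact: it also sends C^{≥0} into D^{≥0}, and commutes with all truncation functors up to isomorphism. -/

import Mathlib

open CategoryTheory CategoryTheory.Limits CategoryTheory.Pretriangulated
open CategoryTheory.Triangulated

section Aux

variable {C : Type*} [Category C] [Preadditive C] [HasZeroObject C] [HasShift C ℤ]
  [∀ n : ℤ, (shiftFunctor C n).Additive] [Pretriangulated C] (t : TStructure C)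

lemma stmt19_le_of_shift (n : ℤ) (X : C) (h : t.le 0 (X⟦n⟧)) : t.le n X := by
  rw [← t.shift_le n 0 n (add_zero n)]
  rwa [ObjectProperty.prop_shift_iff]

lemma stmt19_ge_of_shift (n : ℤ) (X : C) (h : t.ge 0 (X⟦n⟧)) : t.ge n X := by
  rw [← t.shift_ge n 0 n (add_zero n)]
  rwa [ObjectProperty.prop_shift_iff]

/-- maps from a `≤ a` object to a `≥ b` object with `a < b` vanish -/
lemma stmt19_hom_zero {X Y : C} (f : X ⟶ Y) (a b : ℤ) (hab : a < b)
    (hX : t.le a X) (hY : t.ge b Y) : f = 0 := by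
  apply (shiftFunctor C a).map_injective
  rw [Functor.map_zero]
  have hX' : t.le 0 (X⟦a⟧) := t.le_shift a a 0 (by omega) X hX
  have hY' : t.ge (b - a) (Y⟦a⟧) := t.ge_shift b a (b - a) (by omega) Y hY
  exact t.zero' _ hX' (t.ge_antitone (by omega) _ hY')

/-- converse orthogonality: if all maps from `≤ n-1` objects vanish, then `X` is `≥ n` -/
lemma stmt19_mem_ge (n : ℤ) (X : C)
    (h : ∀ (A : C), t.le (n - 1) A → ∀ (f : A ⟶ X), f = 0) : t.ge n X := by
  obtain ⟨A, B, hA, hB, f, g, hh, mem⟩ := t.exists_triangle X (n - 1) n (by omega)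
  have hf : f = 0 := h A hA f
  -- show A is zero via the inverse rotated triangle
  have mem' := inv_rot_of_distTriang _ mem
  obtain ⟨s, hs⟩ := Triangle.coyoneda_exact₂ _ mem' (𝟙 A)
    (by change 𝟙 A ≫ f = 0; rw [hf, comp_zero])
  have hs0 : s = 0 := by
    refine stmt19_hom_zero t s (n - 1) (n + 1) (by omega) hA ?_
    exact t.ge_shift n (-1) (n + 1) (by omega) B hB
  have hzA : IsZero A := by
    rw [IsZero.iff_id_eq_zero, hs, hs0, zero_comp]
    exact rfl
  have : IsIso g := (Triangle.isZero₁_iff_isIso₂ _ mem).1 hzA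
  exact ((t.ge n).prop_iff_of_iso (asIso g)).2 hB

/-- converse orthogonality: if all maps to `≥ n+1` objects vanish, then `X` is `≤ n` -/
lemma stmt19_mem_le (n : ℤ) (X : C)
    (h : ∀ (B : C), t.ge (n + 1) B → ∀ (f : X ⟶ B), f = 0) : t.le n X := by
  obtain ⟨A, B, hA, hB, f, g, hh, mem⟩ := t.exists_triangle X n (n + 1) rfl
  have hg : g = 0 := h B hB g
  have mem' := rot_of_distTriang _ mem
  obtain ⟨s, hs⟩ := Triangle.yoneda_exact₂ _ mem' (𝟙 B)
    (by change g ≫ 𝟙 B = 0; rw [hg, zero_comp])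
  have hs0 : s = 0 := by
    refine stmt19_hom_zero t s (n - 1) (n + 1) (by omega) ?_ hB
    exact t.le_shift n 1 (n - 1) (by omega) A hA
  have hzB : IsZero B := by
    rw [IsZero.iff_id_eq_zero, hs, hs0, comp_zero]
    exact rfl
  have : IsIso f := (Triangle.isZero₃_iff_isIso₁ _ mem).1 hzB
  exact ((t.le n).prop_iff_of_iso (asIso f).symm).2 hA

/-- `GE n` is closed under extensions -/
lemma stmt19_ge_ext (n : ℤ) (Tr : Triangle C) (mem : Tr ∈ distTriang C)
    (h₁ : t.ge n Tr.obj₁) (h₃ : t.ge n Tr.obj₃) : t.ge n Tr.obj₂ := by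
  refine stmt19_mem_ge t n _ (fun A hA φ => ?_)
  have hφ : φ ≫ Tr.mor₂ = 0 := stmt19_hom_zero t _ (n - 1) n (by omega) hA h₃
  obtain ⟨ψ, hψ⟩ := Triangle.coyoneda_exact₂ _ mem φ hφ
  rw [hψ, stmt19_hom_zero t ψ (n - 1) n (by omega) hA h₁, zero_comp]

/-- `LE n` is closed under extensions -/
lemma stmt19_le_ext (n : ℤ) (Tr : Triangle C) (mem : Tr ∈ distTriang C)
    (h₁ : t.le n Tr.obj₁) (h₃ : t.le n Tr.obj₃) : t.le n Tr.obj₂ := by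
  refine stmt19_mem_le t n _ (fun B hB φ => ?_)
  have hφ : Tr.mor₁ ≫ φ = 0 := stmt19_hom_zero t _ n (n + 1) (by omega) h₁ hB
  obtain ⟨ψ, hψ⟩ := Triangle.yoneda_exact₂ _ mem φ hφ
  rw [hψ, stmt19_hom_zero t ψ n (n + 1) (by omega) h₃ hB, comp_zero]

end Aux

/-- Let `T : C ⥤ D` be a triangulated functor between triangulated categories with
t-structures, where every object of `C` is bounded above. If `T` is right t-exact and
sends the heart of `C` into the heart of `D`, then `T` is t-exact: it sends `C^{≥0}` into
`D^{≥0}`, and it commutes with truncations, in the sense that it sends any truncation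
triangle `τ^{≤n} X → X → τ^{>n} X →` of any `X : C` to a truncation triangle of `T X`. -/
theorem stmt19 {C D : Type*} [Category C] [Category D]
    [Preadditive C] [Preadditive D]
    [HasZeroObject C] [HasZeroObject D]
    [HasShift C ℤ] [HasShift D ℤ]
    [∀ n : ℤ, (shiftFunctor C n).Additive] [∀ n : ℤ, (shiftFunctor D n).Additive]
    [Pretriangulated C] [Pretriangulated D]
    (tC : TStructure C) (tD : TStructure D)
    (T : C ⥤ D) [T.CommShift ℤ] [T.IsTriangulated]
    (hbdd : ∀ X : C, ∃ b : ℤ, tC.le b X)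
    (hright : ∀ X : C, tC.le 0 X → tD.le 0 (T.obj X))
    (hheart : ∀ X : C, tC.le 0 X → tC.ge 0 X →
      tD.le 0 (T.obj X) ∧ tD.ge 0 (T.obj X)) :
    (∀ X : C, tC.ge 0 X → tD.ge 0 (T.obj X)) ∧
    (∀ (n : ℤ) (X A B : C) (f : A ⟶ X) (g : X ⟶ B) (h : B ⟶ A⟦(1 : ℤ)⟧),
      Triangle.mk f g h ∈ (distTriang C) →
      tC.le n A → tC.ge (n + 1) B →
      tD.le n (T.obj A) ∧ tD.ge (n + 1) (T.obj B)) := by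
  -- right t-exactness at all degrees
  have hle : ∀ (n : ℤ) (X : C), tC.le n X → tD.le n (T.obj X) := by
    intro n X hX
    have h1 : tC.le 0 (X⟦n⟧) := tC.le_shift n n 0 (by omega) X hX
    have h2 := hright _ h1
    have h3 : tD.le 0 ((T.obj X)⟦n⟧) :=
      ((tD.le 0).prop_iff_of_iso ((T.commShiftIso n).app X)).1 h2
    exact stmt19_le_of_shift tD n _ h3
  -- the heart condition at all degrees (for GE)
  have hheart' : ∀ (n : ℤ) (X : C), tC.le n X → tC.ge n X → tD.ge n (T.obj X) := by
    intro n X hX hX'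
    have h1 : tC.le 0 (X⟦n⟧) := tC.le_shift n n 0 (by omega) X hX
    have h1' : tC.ge 0 (X⟦n⟧) := tC.ge_shift n n 0 (by omega) X hX'
    have h2 := (hheart _ h1 h1').2
    have h3 : tD.ge 0 ((T.obj X)⟦n⟧) :=
      ((tD.ge 0).prop_iff_of_iso ((T.commShiftIso n).app X)).1 h2
    exact stmt19_ge_of_shift tD n _ h3
  -- the key induction on the upper bound
  have key : ∀ (b : ℤ), 0 ≤ b → ∀ (X : C), tC.le b X → tC.ge 0 X → tD.ge 0 (T.obj X) := by
    refine Int.le_induction ?_ ?_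
    · intro X hX hX'
      exact (hheart X hX hX').2
    · intro b hb IH X hXle hXge
      obtain ⟨A, B, hA, hB, f, g, hh, mem⟩ := tC.exists_triangle X b (b + 1) rfl
      -- A is ≥ 0
      have hAge : tC.ge 0 A := by
        refine stmt19_ge_ext tC 0 _ (inv_rot_of_distTriang _ mem) ?_ ?_
        · exact tC.ge_antitone (by omega : (0:ℤ) ≤ b + 2)
            _ (tC.ge_shift (b + 1) (-1) (b + 2) (by omega) B hB)
        · exact hXge
      -- B is ≤ b+1
      have hBle : tC.le (b + 1) B := by
        refine stmt19_le_ext tC (b + 1) _ (rot_of_distTriang _ mem) hXle ?_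
        exact tC.le_monotone (by omega : b - 1 ≤ b + 1)
          _ (tC.le_shift b 1 (b - 1) (by omega) A hA)
      -- apply induction hypothesis and heart condition
      have hTA : tD.ge 0 (T.obj A) := IH A hA hAge
      have hTB : tD.ge 0 (T.obj B) :=
        tD.ge_antitone (by omega : (0:ℤ) ≤ b + 1) _ (hheart' (b + 1) B hBle hB)
      -- conclude with the image triangle
      exact stmt19_ge_ext tD 0 _
        (T.map_distinguished _ mem) hTA hTB
  -- part 1
  have part1 : ∀ X : C, tC.ge 0 X → tD.ge 0 (T.obj X) := by
    intro X hX
    obtain ⟨b, hb⟩ := hbdd X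
    by_cases h0 : 0 ≤ b
    · exact key b h0 X hb hX
    · exact key 0 le_rfl X (tC.le_monotone (by omega : b ≤ 0) _ hb) hX
  -- GE preservation at all degrees
  have hge : ∀ (n : ℤ) (X : C), tC.ge n X → tD.ge n (T.obj X) := by
    intro n X hX
    have h1 : tC.ge 0 (X⟦n⟧) := tC.ge_shift n n 0 (by omega) X hX
    have h2 := part1 _ h1
    have h3 : tD.ge 0 ((T.obj X)⟦n⟧) :=
      ((tD.ge 0).prop_iff_of_iso ((T.commShiftIso n).app X)).1 h2
    exact stmt19_ge_of_shift tD n _ h3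
  refine ⟨part1, fun n X A B f g h _ hA hB => ⟨hle n A hA, hge (n + 1) B hB⟩⟩
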